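/- Let v, w ∈ ℤ² be primitive vectors with ε = det(v, w) ≠ 0. Then there exists a unique non-negative integer x < |ε| such that the matrix P = (v, w)·[[1, −x],[0, |ε|]]^{−1} is a unimodular integer matrix; moreover, for this x, x and |ε| are relatively prime. -/

import Mathlib

/-- determinant of the 2×2 matrix with columns `v` and `w` -/
def det2 (v w : Fin 2 → ℤ) : ℤ := v 0 * w 1 - v 1 * w 0

/-- the 2×2 matrix with columns `v` and `w` -/
def colMat (v w : Fin 2 → ℤ) : Matrix (Fin 2) (Fin 2) ℤ := !![v 0, w 0; v 1, w 1]

/-- a 2×2 integer matrix is unimodular if its determinant is `±1` -/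
def Unimod (A : Matrix (Fin 2) (Fin 2) ℤ) : Prop := A.det = 1 ∨ A.det = -1

/-- a vector of `ℤ²` is primitive if its components are relatively prime -/
def Primitive (v : Fin 2 → ℤ) : Prop := Int.gcd (v 0) (v 1) = 1

/-- The unimodularity condition is equivalent to a pair of divisibility conditions. -/
lemma key_equiv (v w : Fin 2 → ℤ) (hε : det2 v w ≠ 0) (x : ℤ) :
    (∃ P : Matrix (Fin 2) (Fin 2) ℤ, Unimod P ∧
        P * !![1, -x; 0, |det2 v w|] = colMat v w) ↔
    (|det2 v w| ∣ v 0 * x + w 0 ∧ |det2 v w| ∣ v 1 * x + w 1) := by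
  set ε := det2 v w with hεdef
  set e := |ε| with hedef
  have he0 : 0 < e := abs_pos.mpr hε
  constructor
  · rintro ⟨P, hP, hPM⟩
    have h00 := congrFun (congrFun hPM 0) 0
    have h01 := congrFun (congrFun hPM 0) 1
    have h10 := congrFun (congrFun hPM 1) 0
    have h11 := congrFun (congrFun hPM 1) 1
    simp [Matrix.mul_apply, colMat, Fin.sum_univ_two] at h00 h01 h10 h11
    constructor
    · exact ⟨P 0 1, by rw [← h00]; linarith [h01]⟩
    · exact ⟨P 1 1, by rw [← h10]; linarith [h11]⟩
  · rintro ⟨⟨b, hb⟩, ⟨d, hd⟩⟩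
    refine ⟨!![v 0, b; v 1, d], ?_, ?_⟩
    · have hdet : (!![v 0, b; v 1, d] : Matrix (Fin 2) (Fin 2) ℤ).det * e = ε := by
        rw [Matrix.det_fin_two_of]
        have : (v 0 * d - b * v 1) * e = v 0 * (d * e) - v 1 * (b * e) := by ring
        rw [this, hεdef, det2]; linear_combination v 1 * hb - v 0 * hd
      have habs : |(!![v 0, b; v 1, d] : Matrix (Fin 2) (Fin 2) ℤ).det| * e = e := by
        have := congrArg abs hdet
        rwa [abs_mul, abs_abs, ← hedef] at this
      have h1 : |(!![v 0, b; v 1, d] : Matrix (Fin 2) (Fin 2) ℤ).det| = 1 := by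
        nlinarith [habs]
      have := abs_eq (by norm_num : (0:ℤ) ≤ 1) |>.mp h1
      exact this
    · ext i j
      fin_cases i <;> fin_cases j <;>
        simp [Matrix.mul_apply, colMat, Fin.sum_univ_two] <;> linarith [hb, hd]

/-- Lemma 2.1: for primitive `v, w` with `ε = det(v, w) ≠ 0` there is a unique
`0 ≤ x < |ε|` such that `(v, w)·[[1, -x],[0, |ε|]]⁻¹` is a unimodular integer matrix,
and this `x` is relatively prime to `|ε|`. -/
theorem exists_unique_x_unimodular
    (v w : Fin 2 → ℤ) (hv : Primitive v) (hw : Primitive w) (hε : det2 v w ≠ 0) :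
    (∃! x : ℤ, 0 ≤ x ∧ x < |det2 v w| ∧
      ∃ P : Matrix (Fin 2) (Fin 2) ℤ, Unimod P ∧
        P * !![1, -x; 0, |det2 v w|] = colMat v w) ∧
    (∀ x : ℤ, (0 ≤ x ∧ x < |det2 v w| ∧
      ∃ P : Matrix (Fin 2) (Fin 2) ℤ, Unimod P ∧
        P * !![1, -x; 0, |det2 v w|] = colMat v w) →
      Int.gcd x |det2 v w| = 1) := by
  have he0 : 0 < |det2 v w| := abs_pos.mpr hε
  set e := |det2 v w| with hedef
  have heε : e ∣ det2 v w := (abs_dvd _ _).mpr dvd_rfl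
  -- Bezout coefficients for v
  have hst : v 0 * Int.gcdA (v 0) (v 1) + v 1 * Int.gcdB (v 0) (v 1) = 1 := by
    have := Int.gcd_eq_gcd_ab (v 0) (v 1)
    rw [hv] at this
    exact_mod_cast this.symm
  set s := Int.gcdA (v 0) (v 1)
  set t := Int.gcdB (v 0) (v 1)
  set x0 : ℤ := -(s * w 0 + t * w 1) with hx0def
  have hd0 : e ∣ v 0 * x0 + w 0 := by
    have h : v 0 * x0 + w 0 = -t * det2 v w := by
      rw [hx0def, det2]; linear_combination (-(w 0)) * hst
    rw [h]; exact heε.mul_left _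
  have hd1 : e ∣ v 1 * x0 + w 1 := by
    have h : v 1 * x0 + w 1 = s * det2 v w := by
      rw [hx0def, det2]; linear_combination (-(w 1)) * hst
    rw [h]; exact heε.mul_left _
  have hmod : ∀ a c : ℤ, e ∣ a * x0 + c → e ∣ a * (x0 % e) + c := by
    intro a c h
    have heq : a * (x0 % e) + c = (a * x0 + c) - e * (a * (x0 / e)) := by
      rw [Int.emod_def]; ring
    rw [heq]; exact dvd_sub h (Dvd.intro _ rfl)
  -- uniqueness helper
  have uniq : ∀ x y : ℤ, 0 ≤ x → x < e → 0 ≤ y → y < e →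
      e ∣ v 0 * x + w 0 → e ∣ v 1 * x + w 1 →
      e ∣ v 0 * y + w 0 → e ∣ v 1 * y + w 1 → x = y := by
    intro x y hx0' hx1' hy0' hy1' ha0 ha1 hb0 hb1
    have h1 : e ∣ v 0 * (x - y) := by
      have := dvd_sub ha0 hb0
      have heq : v 0 * x + w 0 - (v 0 * y + w 0) = v 0 * (x - y) := by ring
      rwa [heq] at this
    have h2 : e ∣ v 1 * (x - y) := by
      have := dvd_sub ha1 hb1
      have heq : v 1 * x + w 1 - (v 1 * y + w 1) = v 1 * (x - y) := by ring
      rwa [heq] at this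
    have hdiv : e ∣ x - y := by
      have heq : x - y = s * (v 0 * (x - y)) + t * (v 1 * (x - y)) := by
        linear_combination (x - y) * hst.symm
      rw [heq]; exact dvd_add (h1.mul_left s) (h2.mul_left t)
    by_contra hne
    have hpos : 0 < |x - y| := abs_pos.mpr (sub_ne_zero.mpr hne)
    have : e ≤ |x - y| := Int.le_of_dvd hpos ((dvd_abs e (x - y)).mpr hdiv)
    have hlt : |x - y| < e := abs_lt.mpr ⟨by omega, by omega⟩
    omega
  constructor
  · refine ⟨x0 % e, ⟨Int.emod_nonneg x0 (ne_of_gt he0), Int.emod_lt_of_pos x0 he0, ?_⟩, ?_⟩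
    · exact (key_equiv v w hε _).mpr ⟨hmod _ _ hd0, hmod _ _ hd1⟩
    · rintro y ⟨hy0, hy1, hPy⟩
      obtain ⟨hb0, hb1⟩ := (key_equiv v w hε _).mp hPy
      exact uniq y (x0 % e) hy0 hy1 (Int.emod_nonneg x0 (ne_of_gt he0))
        (Int.emod_lt_of_pos x0 he0) hb0 hb1 (hmod _ _ hd0) (hmod _ _ hd1)
  · rintro x ⟨hx1, hx2, hPx⟩
    obtain ⟨ha0, ha1⟩ := (key_equiv v w hε _).mp hPx
    set g : ℕ := Int.gcd x e with hgdef
    have hg1 : (g : ℤ) ∣ x := Int.gcd_dvd_left x e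
    have hg2 : (g : ℤ) ∣ e := Int.gcd_dvd_right x e
    have hgw0 : (g : ℤ) ∣ w 0 := by
      have h := hg2.trans ha0
      have heq : w 0 = (v 0 * x + w 0) - v 0 * x := by ring
      rw [heq]; exact dvd_sub h (hg1.mul_left _)
    have hgw1 : (g : ℤ) ∣ w 1 := by
      have h := hg2.trans ha1
      have heq : w 1 = (v 1 * x + w 1) - v 1 * x := by ring
      rw [heq]; exact dvd_sub h (hg1.mul_left _)
    have hgw : (g : ℤ) ∣ (Int.gcd (w 0) (w 1) : ℤ) := Int.dvd_coe_gcd hgw0 hgw1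
    rw [hw] at hgw
    exact Nat.dvd_one.mp (Int.ofNat_dvd.mp (by exact_mod_cast hgw))
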